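/- Let f : ℝ² ∖ {0} → ℝ be a C¹ function satisfying S·f_P(S,P) = P·f_S(S,P) for all (S,P) ≠ (0,0). Then for every point x₀ ∈ ℝ² ∖ {0} there exists an open neighbourhood V of x₀ and a function h of one real variable such that f(S,P) = h(S² + P²) for all (S,P) ∈ V. -/

import Mathlib

/-- A C¹ function on ℝ² ∖ {0} annihilated by the rotation vector field is locally
a function of S² + P². -/
theorem rotation_invariant_is_radial (f : ℝ → ℝ → ℝ)
    (hf : ContDiffOn ℝ 1 (fun p : ℝ × ℝ => f p.1 p.2) {p : ℝ × ℝ | p ≠ 0})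
    (hrot : ∀ p : ℝ × ℝ, p ≠ 0 →
      p.1 * deriv (fun t => f p.1 t) p.2 = p.2 * deriv (fun s => f s p.2) p.1) :
    ∀ x₀ : ℝ × ℝ, x₀ ≠ 0 → ∃ V : Set (ℝ × ℝ), IsOpen V ∧ x₀ ∈ V ∧
      ∃ h : ℝ → ℝ, ∀ p ∈ V, f p.1 p.2 = h (p.1 ^ 2 + p.2 ^ 2) := by
  intro x₀ hx₀
  set F : ℝ × ℝ → ℝ := fun p => f p.1 p.2 with hF
  have hopen : IsOpen {p : ℝ × ℝ | p ≠ 0} := isOpen_ne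
  have hdiff : ∀ q : ℝ × ℝ, q ≠ 0 → DifferentiableAt ℝ F q := fun q hq =>
    (hf.differentiableOn one_ne_zero).differentiableAt (hopen.mem_nhds hq)
  -- partial derivatives equal fderiv on basis vectors
  have hpart2 : ∀ q : ℝ × ℝ, q ≠ 0 →
      deriv (fun t => f q.1 t) q.2 = fderiv ℝ F q (0, 1) := by
    intro q hq
    have hc : HasDerivAt (fun t : ℝ => ((q.1, t) : ℝ × ℝ)) (0, 1) q.2 :=
      (hasDerivAt_const _ _).prodMk (hasDerivAt_id _)
    have := ((hdiff q hq).hasFDerivAt).comp_hasDerivAt q.2 hc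
    exact this.deriv
  have hpart1 : ∀ q : ℝ × ℝ, q ≠ 0 →
      deriv (fun s => f s q.2) q.1 = fderiv ℝ F q (1, 0) := by
    intro q hq
    have hc : HasDerivAt (fun s : ℝ => ((s, q.2) : ℝ × ℝ)) (1, 0) q.1 :=
      (hasDerivAt_id _).prodMk (hasDerivAt_const _ _)
    have := ((hdiff q hq).hasFDerivAt).comp_hasDerivAt q.1 hc
    exact this.deriv
  refine ⟨{p : ℝ × ℝ | p ≠ 0}, hopen, hx₀, fun u => f (Real.sqrt u) 0, ?_⟩
  intro p hp
  have hp' : (p : ℝ × ℝ) ≠ 0 := hp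
  set r : ℝ := Real.sqrt (p.1 ^ 2 + p.2 ^ 2) with hr
  have hsum : 0 < p.1 ^ 2 + p.2 ^ 2 := by
    rcases Prod.mk.injEq p.1 p.2 0 0 ▸ (fun h => hp' (Prod.ext_iff.mpr h)) with _
    by_contra hle
    push_neg at hle
    have h1 : p.1 = 0 := by nlinarith [sq_nonneg p.1, sq_nonneg p.2]
    have h2 : p.2 = 0 := by nlinarith [sq_nonneg p.1, sq_nonneg p.2]
    exact hp' (Prod.ext h1 h2)
  have hrpos : 0 < r := Real.sqrt_pos.mpr hsum
  -- the circle curve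
  set γ : ℝ → ℝ × ℝ := fun θ => (r * Real.cos θ, r * Real.sin θ) with hγdef
  have hγne : ∀ θ, γ θ ≠ 0 := by
    intro θ h
    have h1 : r * Real.cos θ = 0 := congrArg Prod.fst h
    have h2 : r * Real.sin θ = 0 := congrArg Prod.snd h
    have hc : Real.cos θ = 0 := by
      rcases mul_eq_zero.mp h1 with h | h
      · exact absurd h hrpos.ne'
      · exact h
    have hs : Real.sin θ = 0 := by
      rcases mul_eq_zero.mp h2 with h | h
      · exact absurd h hrpos.ne'
      · exact h
    have := Real.sin_sq_add_cos_sq θ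
    rw [hs, hc] at this; norm_num at this
  set g : ℝ → ℝ := fun θ => F (γ θ) with hgdef
  have hg : ∀ θ, HasDerivAt g 0 θ := by
    intro θ
    have hγ' : HasDerivAt γ (r * -Real.sin θ, r * Real.cos θ) θ :=
      ((Real.hasDerivAt_cos θ).const_mul r).prodMk ((Real.hasDerivAt_sin θ).const_mul r)
    have hFd := (hdiff (γ θ) (hγne θ)).hasFDerivAt
    have hcomp := hFd.comp_hasDerivAt θ hγ'
    have hkey : fderiv ℝ F (γ θ) (r * -Real.sin θ, r * Real.cos θ) = 0 := by
      set L := fderiv ℝ F (γ θ) with hL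
      have hvec : ((r * -Real.sin θ, r * Real.cos θ) : ℝ × ℝ) =
          (r * -Real.sin θ) • ((1 : ℝ), (0 : ℝ)) + (r * Real.cos θ) • ((0 : ℝ), (1 : ℝ)) := by
        simp [Prod.ext_iff]
      rw [hvec, map_add, map_smul, map_smul]
      have hrot' := hrot (γ θ) (hγne θ)
      rw [hpart2 (γ θ) (hγne θ), hpart1 (γ θ) (hγne θ)] at hrot'
      have h1 : (γ θ).1 = r * Real.cos θ := rfl
      have h2 : (γ θ).2 = r * Real.sin θ := rfl
      rw [h1, h2] at hrot'
      simp only [smul_eq_mul]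
      nlinarith [hrot']
    rw [hkey] at hcomp
    exact hcomp
  have hgconst : ∀ θ₁ θ₂, g θ₁ = g θ₂ := by
    intro θ₁ θ₂
    exact is_const_of_deriv_eq_zero (fun θ => (hg θ).differentiableAt)
      (fun θ => (hg θ).deriv) θ₁ θ₂
  -- find θ with γ θ = p
  set z : ℂ := ⟨p.1, p.2⟩ with hz
  have hzne : z ≠ 0 := by
    intro h
    apply hp'
    have h1 : z.re = 0 := by rw [h]; rfl
    have h2 : z.im = 0 := by rw [h]; rfl
    exact Prod.ext h1 h2
  have habs : ‖z‖ = r := by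
    rw [Complex.norm_def, Complex.normSq_mk, hr]
    ring_nf
  have hθ1 : r * Real.cos z.arg = p.1 := by
    rw [← habs]; exact Complex.norm_mul_cos_arg z
  have hθ2 : r * Real.sin z.arg = p.2 := by
    rw [← habs]; exact Complex.norm_mul_sin_arg z
  have hpg : f p.1 p.2 = g z.arg := by
    simp only [hgdef, hγdef, hF, hθ1, hθ2]
  have hg0 : g 0 = f r 0 := by
    simp [hgdef, hγdef, hF]
  rw [hpg, hgconst z.arg 0, hg0]
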